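/- Let φ : H ↪ H' be an embedding of groups acting on a set Ω, and let Orb(ω) be the orbit of ω ∈ Ω under the image of φ. If G ≀_{Orb(ω)} H has no surjective strategy, then G ≀_Ω H' has no surjective strategy. -/

import Mathlib

/-- One step of multiplication in the wreath product `G ≀ H` (base `Ω → G`,
with `H` acting on `Ω`): `(k,h)·(k',h') = (k·(h·k'), hh')`. -/
def wmul {G H Ω : Type*} [Group G] [Group H] [MulAction H Ω]
    (a b : (Ω → G) × H) : (Ω → G) × H :=
  (a.1 * fun ω => b.1 (a.2⁻¹ • ω), a.2 * b.2)

/-- `ks` is a surjective strategy for `G ≀ H`: for every adversarial sequence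
`hs` of the same length, the projections to the base `K = Ω → G` of the partial
products `id, (k₁,h₁), (k₁,h₁)(k₂,h₂), …` cover all of `K`. -/
def IsSurjStrat (G : Type*) [Group G] (H : Type*) [Group H] (Ω : Type*) [MulAction H Ω]
    (ks : List (Ω → G)) : Prop :=
  ∀ hs : List H, hs.length = ks.length →
    ∀ k : Ω → G, k ∈ (((ks.zip hs).scanl wmul 1).map Prod.fst)

/-- The puzzle `G ≀ H` (switches `G` at positions `Ω`, spun by `H`) has a
surjective strategy. -/
def HasSurjStrat (G : Type*) [Group G] (H : Type*) [Group H] (Ω : Type*) [MulAction H Ω] : Prop :=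
  ∃ ks : List (Ω → G), IsSurjStrat G H Ω ks

private lemma stmt3_key {G H H' Ω : Type*} [Group G] [Group H] [Group H'] [MulAction H' Ω]
    [MulAction H Ω]
    (φ : H →* H')
    (hcomp : ∀ (h : H) (x : Ω), h • x = φ h • x)
    (ω : Ω)
    (p : (Ω → G) → (MulAction.orbit H ω → G))
    (hp : ∀ k x, p k x = k ↑x) :
    ∀ (ks : List (Ω → G)) (hs : List H) (a : (Ω → G) × H')
      (b : ((MulAction.orbit H ω) → G) × H),
      p a.1 = b.1 → a.2 = φ b.2 →
      (((ks.zip (hs.map φ)).scanl wmul a).map Prod.fst).map p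
        = (((ks.map p).zip hs).scanl wmul b).map Prod.fst := by
  intro ks
  induction ks with
  | nil => intro hs a b h1 h2; simp [h1]
  | cons k ks ih =>
    intro hs a b h1 h2
    cases hs with
    | nil => simp [h1]
    | cons h hs =>
      simp only [List.map_cons, List.zip_cons_cons, List.scanl_cons, List.map]
      rw [h1]
      congr 1
      apply ih
      · funext x
        show p (a.1 * fun y => k (a.2⁻¹ • y)) x = (b.1 * fun y => p k (b.2⁻¹ • y)) x
        rw [hp]
        have h3 : a.2⁻¹ • (x : Ω) = ((b.2⁻¹ • x : MulAction.orbit H ω) : Ω) := by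
          rw [MulAction.orbit.coe_smul, hcomp, h2, map_inv]
        simp only [Pi.mul_apply, h3, ← h1, hp]
      · show a.2 * φ h = φ (b.2 * h)
        rw [h2, map_mul]

theorem stmt3 {G H H' Ω : Type*} [Group G] [Group H] [Group H'] [MulAction H' Ω]
    [MulAction H Ω] [Fintype Ω] [Finite G] [Finite H] [Finite H'] [FaithfulSMul H' Ω]
    (φ : H →* H') (hφ : Function.Injective φ)
    (hcomp : ∀ (h : H) (x : Ω), h • x = φ h • x)
    (ω : Ω)
    (horb : ¬ HasSurjStrat G H (MulAction.orbit H ω)) :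
    ¬ HasSurjStrat G H' Ω := by
  classical
  intro ⟨ks, hks⟩
  apply horb
  set p : (Ω → G) → (MulAction.orbit H ω → G) := fun k x => k ↑x with hpdef
  refine ⟨ks.map p, ?_⟩
  intro hs hlen k
  -- extend k to Ω
  set ktil : Ω → G := fun x =>
    if hx : x ∈ MulAction.orbit H ω then k ⟨x, hx⟩ else 1 with hkt
  have hpk : p ktil = k := by
    funext x
    simp only [hpdef, hkt, dif_pos x.2]
  have hmem := hks (hs.map φ) (by simpa using hlen) ktil
  have hkey := stmt3_key φ hcomp ω p (fun _ _ => rfl) ks hs 1 1 (by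
      funext x; simp [hpdef]) (by simp)
  rw [← hkey]
  rw [← hpk]
  exact List.mem_map_of_mem (f := p) hmem
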